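/- The parallel reduction relation ⇒ of the calculus Fx satisfies the diamond property: if M ⇒ N and M ⇒ N', then there exists a term P such that N ⇒ P and N' ⇒ P. -/
import Mathlib


/-- Exception names (a countable set, taken to be ℕ). -/
abbrev ExnName := ℕ

/-- Terms of the calculus Fx (de Bruijn indices). -/
inductive Tm : Type
  | var : ℕ → Tm
  | lam : Tm → Tm
  | app : Tm → Tm → Tm
  | raise : ExnName → Tm
  | tryc : Tm → ExnName → Tm → Tm
  | zero : Tm
  | succ : Tm
  | natrec : Tm
  | nil : Tm
  | cons : Tm
  | foldr : Tm
  deriving DecidableEq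

namespace Tm

/-- Shifting of de Bruijn indices ≥ k. -/
def lift : ℕ → Tm → Tm
  | k, var i => if i < k then var i else var (i + 1)
  | k, lam M => lam (lift (k + 1) M)
  | k, app M N => app (lift k M) (lift k N)
  | k, tryc M e N => tryc (lift k M) e (lift k N)
  | _, raise e => raise e
  | _, zero => zero
  | _, succ => succ
  | _, natrec => natrec
  | _, nil => nil
  | _, cons => cons
  | _, foldr => foldr

/-- Capture-avoiding substitution `M[k := N]` (de Bruijn). -/
def subst : ℕ → Tm → Tm → Tm
  | k, N, var i => if i = k then N else if k < i then var (i - 1) else var i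
  | k, N, lam M => lam (subst (k + 1) (lift 0 N) M)
  | k, N, app M P => app (subst k N M) (subst k N P)
  | k, N, tryc M e P => tryc (subst k N M) e (subst k N P)
  | _, _, raise e => raise e
  | _, _, zero => zero
  | _, _, succ => succ
  | _, _, natrec => natrec
  | _, _, nil => nil
  | _, _, cons => cons
  | _, _, foldr => foldr

end Tm

open Tm

/-- Regular values of Fx. -/
inductive RegVal : Tm → Prop
  | lam (M) : RegVal (lam M)
  | zero : RegVal zero
  | succ : RegVal succ
  | succApp (N) : RegVal (app succ N)
  | natrec : RegVal natrec
  | natrec1 (M) : RegVal (app natrec M)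
  | natrec2 (M N) : RegVal (app (app natrec M) N)
  | nil : RegVal nil
  | cons : RegVal cons
  | cons1 (M) : RegVal (app cons M)
  | cons2 (M N) : RegVal (app (app cons M) N)
  | foldr : RegVal foldr
  | foldr1 (M) : RegVal (app foldr M)
  | foldr2 (M N) : RegVal (app (app foldr M) N)

/-- The notion of reduction ▷ of Fx. -/
inductive Head : Tm → Tm → Prop
  | beta (M N) : Head (app (lam M) N) (subst 0 N M)
  | raiseApp (e M) : Head (app (raise e) M) (raise e)
  | tryCatch (e N) : Head (tryc (raise e) e N) N
  | tryOther (e e' N) : e ≠ e' → Head (tryc (raise e') e N) (raise e')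
  | tryVal (V e N) : RegVal V → Head (tryc V e N) V
  | recZero (X Y) : Head (app (app (app natrec X) Y) zero) X
  | recSucc (X Y N) :
      Head (app (app (app natrec X) Y) (app succ N))
        (app (app Y N) (app (app (app natrec X) Y) N))
  | recRaise (X Y e) : Head (app (app (app natrec X) Y) (raise e)) (raise e)
  | foldNil (X Y) : Head (app (app (app foldr X) Y) nil) X
  | foldCons (X Y E L) :
      Head (app (app (app foldr X) Y) (app (app cons E) L))
        (app (app (app Y E) L) (app (app (app foldr X) Y) L))
  | foldRaise (X Y e) : Head (app (app (app foldr X) Y) (raise e)) (raise e)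

/-- One-step reduction: compatible closure of ▷. -/
inductive Red : Tm → Tm → Prop
  | head {M N} : Head M N → Red M N
  | appL {M M' N} : Red M M' → Red (app M N) (app M' N)
  | appR {M N N'} : Red N N' → Red (app M N) (app M N')
  | lam {M M'} : Red M M' → Red (lam M) (lam M')
  | tryL {M M' e N} : Red M M' → Red (tryc M e N) (tryc M' e N)
  | tryR {M e N N'} : Red N N' → Red (tryc M e N) (tryc M e N')

/-- Many-step reduction. -/
abbrev RedStar : Tm → Tm → Prop := Relation.ReflTransGen Red

/-- Parallel reduction ⇒ for Fx. -/
inductive Par : Tm → Tm → Prop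
  | refl (M) : Par M M
  | lam {M M'} : Par M M' → Par (lam M) (lam M')
  | app {M M' N N'} : Par M M' → Par N N' → Par (app M N) (app M' N')
  | beta {M M' N N'} : Par M M' → Par N N' → Par (app (lam M) N) (subst 0 N' M')
  | raiseApp (e M) : Par (app (raise e) M) (raise e)
  | tryCatch {e N N'} : Par N N' → Par (tryc (raise e) e N) N'
  | tryOther (e e' N) : e ≠ e' → Par (tryc (raise e') e N) (raise e')
  | tryCong {M M' e N N'} : Par M M' → Par N N' → Par (tryc M e N) (tryc M' e N')
  | tryVal {V V' e N} : RegVal V → Par V V' → Par (tryc V e N) V'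
  | recZero {X X'} (Y) : Par X X' → Par (app (app (app natrec X) Y) zero) X'
  | recSucc {X X' Y Y' N N'} : Par X X' → Par Y Y' → Par N N' →
      Par (app (app (app natrec X) Y) (app succ N))
        (app (app Y' N') (app (app (app natrec X') Y') N'))
  | recRaise (X Y e) : Par (app (app (app natrec X) Y) (raise e)) (raise e)
  | foldNil {X X'} (Y) : Par X X' → Par (app (app (app foldr X) Y) nil) X'
  | foldCons {X X' Y Y' E E' L L'} : Par X X' → Par Y Y' → Par E E' → Par L L' →
      Par (app (app (app foldr X) Y) (app (app cons E) L))
        (app (app (app Y' E') L') (app (app (app foldr X') Y') L'))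
  | foldRaise (X Y e) : Par (app (app (app foldr X) Y) (raise e)) (raise e)

namespace Tm

theorem lift_lift (M : Tm) : ∀ j k, j ≤ k → lift j (lift k M) = lift (k+1) (lift j M) := by
  induction M with
  | var i =>
    intro j k h
    simp only [lift]
    split_ifs <;> simp only [lift] <;> split_ifs <;> first | rfl | omega | (congr 1; omega)
  | lam M ih => intro j k h; simp only [lift, ih (j+1) (k+1) (by omega)]
  | app M N ihM ihN => intro j k h; simp only [lift, ihM j k h, ihN j k h]
  | tryc M e N ihM ihN => intro j k h; simp only [lift, ihM j k h, ihN j k h]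
  | _ => intros; rfl

theorem subst_lift (M : Tm) : ∀ k N, subst k N (lift k M) = M := by
  induction M with
  | var i =>
    intro k N
    simp only [lift]
    split_ifs <;> simp only [subst] <;> split_ifs <;> first | rfl | omega | (congr 1; omega)
  | lam M ih => intro k N; simp only [lift, subst, ih]
  | app M N ihM ihN => intro k N'; simp only [lift, subst, ihM, ihN]
  | tryc M e N ihM ihN => intro k N'; simp only [lift, subst, ihM, ihN]
  | _ => intros; rfl

theorem lift_subst (M : Tm) : ∀ j k N, j ≤ k →
    lift k (subst j N M) = subst j (lift k N) (lift (k+1) M) := by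
  induction M with
  | var i =>
    intro j k N h
    simp only [subst, lift]
    split_ifs <;> simp only [subst, lift] <;> split_ifs <;>
      first | rfl | omega | (congr 1; omega)
  | lam M ih =>
    intro j k N h
    simp only [subst, lift, ih (j+1) (k+1) _ (by omega)]
    rw [lift_lift N 0 k (by omega)]
  | app M N ihM ihN => intro j k N' h; simp only [subst, lift, ihM _ _ _ h, ihN _ _ _ h]
  | tryc M e N ihM ihN => intro j k N' h; simp only [subst, lift, ihM _ _ _ h, ihN _ _ _ h]
  | _ => intros; rfl

theorem lift_subst_high (M : Tm) : ∀ j k N, k ≤ j →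
    lift k (subst j N M) = subst (j+1) (lift k N) (lift k M) := by
  induction M with
  | var i =>
    intro j k N h
    simp only [subst, lift]
    split_ifs <;> simp only [subst, lift] <;> split_ifs <;>
      first | rfl | omega | (congr 1; omega)
  | lam M ih =>
    intro j k N h
    simp only [subst, lift, ih (j+1) (k+1) _ (by omega)]
    rw [lift_lift N 0 k (by omega)]
  | app M N ihM ihN => intro j k N' h; simp only [subst, lift, ihM _ _ _ h, ihN _ _ _ h]
  | tryc M e N ihM ihN => intro j k N' h; simp only [subst, lift, ihM _ _ _ h, ihN _ _ _ h]
  | _ => intros; rfl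

theorem subst_subst (M : Tm) : ∀ j k N P, j ≤ k →
    subst k N (subst j P M) = subst j (subst k N P) (subst (k+1) (lift j N) M) := by
  induction M with
  | var i =>
    intro j k N P h
    simp only [subst]
    split_ifs <;> simp only [subst, subst_lift] <;>
      first
      | rfl | omega | (exfalso; omega) | (congr 1; omega)
      | (split_ifs <;> first | rfl | omega | (exfalso; omega) | (congr 1; omega))
  | lam M ih =>
    intro j k N P h
    simp only [subst, ih (j+1) (k+1) _ _ (by omega)]
    rw [lift_subst_high P k 0 N (by omega), lift_lift N 0 j (by omega)]
  | app M N ihM ihN => intro j k N' P h; simp only [subst, ihM _ _ _ _ h, ihN _ _ _ _ h]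
  | tryc M e N ihM ihN => intro j k N' P h; simp only [subst, ihM _ _ _ _ h, ihN _ _ _ _ h]
  | _ => intros; rfl

end Tm
/-- Boolean test for regular values. -/
def isRV : Tm → Bool
  | Tm.lam _ | Tm.zero | Tm.succ | Tm.natrec | Tm.nil | Tm.cons | Tm.foldr => true
  | Tm.app Tm.succ _ => true
  | Tm.app Tm.natrec _ => true
  | Tm.app (Tm.app Tm.natrec _) _ => true
  | Tm.app Tm.cons _ => true
  | Tm.app (Tm.app Tm.cons _) _ => true
  | Tm.app Tm.foldr _ => true
  | Tm.app (Tm.app Tm.foldr _) _ => true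
  | _ => false

theorem isRV_iff (V : Tm) : isRV V = true ↔ RegVal V := by
  constructor
  · intro h
    match V, h with
    | Tm.lam M, _ => exact RegVal.lam M
    | Tm.zero, _ => exact RegVal.zero
    | Tm.succ, _ => exact RegVal.succ
    | Tm.natrec, _ => exact RegVal.natrec
    | Tm.nil, _ => exact RegVal.nil
    | Tm.cons, _ => exact RegVal.cons
    | Tm.foldr, _ => exact RegVal.foldr
    | Tm.app Tm.succ N, _ => exact RegVal.succApp N
    | Tm.app Tm.natrec M, _ => exact RegVal.natrec1 M
    | Tm.app (Tm.app Tm.natrec M) N, _ => exact RegVal.natrec2 M N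
    | Tm.app Tm.cons M, _ => exact RegVal.cons1 M
    | Tm.app (Tm.app Tm.cons M) N, _ => exact RegVal.cons2 M N
    | Tm.app Tm.foldr M, _ => exact RegVal.foldr1 M
    | Tm.app (Tm.app Tm.foldr M) N, _ => exact RegVal.foldr2 M N
  · intro h; cases h <;> rfl

theorem RegVal.lift {V : Tm} (h : RegVal V) (k : ℕ) : RegVal (Tm.lift k V) := by
  cases h <;> simp only [Tm.lift] <;> constructor

theorem RegVal.subst {V : Tm} (h : RegVal V) (k : ℕ) (N : Tm) : RegVal (Tm.subst k N V) := by
  cases h <;> simp only [Tm.subst] <;> constructor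

/-- Inversion lemmas for parallel reduction from rigid shapes. -/
theorem par_raise_inv {e T} (h : Par (Tm.raise e) T) : T = Tm.raise e := by
  cases h <;> rfl

theorem par_lam_inv {M T} (h : Par (Tm.lam M) T) : ∃ M', T = Tm.lam M' ∧ Par M M' := by
  cases h with
  | refl => exact ⟨M, rfl, Par.refl M⟩
  | lam h => exact ⟨_, rfl, h⟩

theorem par_zero_inv {T} (h : Par Tm.zero T) : T = Tm.zero := by cases h <;> rfl
theorem par_succ_inv {T} (h : Par Tm.succ T) : T = Tm.succ := by cases h <;> rfl
theorem par_natrec_inv {T} (h : Par Tm.natrec T) : T = Tm.natrec := by cases h <;> rfl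
theorem par_nil_inv {T} (h : Par Tm.nil T) : T = Tm.nil := by cases h <;> rfl
theorem par_cons_inv {T} (h : Par Tm.cons T) : T = Tm.cons := by cases h <;> rfl
theorem par_foldr_inv {T} (h : Par Tm.foldr T) : T = Tm.foldr := by cases h <;> rfl

theorem par_succApp_inv {N T} (h : Par (Tm.app Tm.succ N) T) :
    ∃ N', T = Tm.app Tm.succ N' ∧ Par N N' := by
  cases h with
  | refl => exact ⟨N, rfl, Par.refl N⟩
  | app h1 h2 => rw [par_succ_inv h1]; exact ⟨_, rfl, h2⟩

theorem par_natrec1_inv {X T} (h : Par (Tm.app Tm.natrec X) T) :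
    ∃ X', T = Tm.app Tm.natrec X' ∧ Par X X' := by
  cases h with
  | refl => exact ⟨X, rfl, Par.refl X⟩
  | app h1 h2 => rw [par_natrec_inv h1]; exact ⟨_, rfl, h2⟩

theorem par_natrec2_inv {X Y T} (h : Par (Tm.app (Tm.app Tm.natrec X) Y) T) :
    ∃ X' Y', T = Tm.app (Tm.app Tm.natrec X') Y' ∧ Par X X' ∧ Par Y Y' := by
  cases h with
  | refl => exact ⟨X, Y, rfl, Par.refl X, Par.refl Y⟩
  | app h1 h2 =>
    obtain ⟨X', rfl, hX⟩ := par_natrec1_inv h1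
    exact ⟨X', _, rfl, hX, h2⟩

theorem par_foldr1_inv {X T} (h : Par (Tm.app Tm.foldr X) T) :
    ∃ X', T = Tm.app Tm.foldr X' ∧ Par X X' := by
  cases h with
  | refl => exact ⟨X, rfl, Par.refl X⟩
  | app h1 h2 => rw [par_foldr_inv h1]; exact ⟨_, rfl, h2⟩

theorem par_foldr2_inv {X Y T} (h : Par (Tm.app (Tm.app Tm.foldr X) Y) T) :
    ∃ X' Y', T = Tm.app (Tm.app Tm.foldr X') Y' ∧ Par X X' ∧ Par Y Y' := by
  cases h with
  | refl => exact ⟨X, Y, rfl, Par.refl X, Par.refl Y⟩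
  | app h1 h2 =>
    obtain ⟨X', rfl, hX⟩ := par_foldr1_inv h1
    exact ⟨X', _, rfl, hX, h2⟩

theorem par_cons1_inv {E T} (h : Par (Tm.app Tm.cons E) T) :
    ∃ E', T = Tm.app Tm.cons E' ∧ Par E E' := by
  cases h with
  | refl => exact ⟨E, rfl, Par.refl E⟩
  | app h1 h2 => rw [par_cons_inv h1]; exact ⟨_, rfl, h2⟩

theorem par_cons2_inv {E L T} (h : Par (Tm.app (Tm.app Tm.cons E) L) T) :
    ∃ E' L', T = Tm.app (Tm.app Tm.cons E') L' ∧ Par E E' ∧ Par L L' := by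
  cases h with
  | refl => exact ⟨E, L, rfl, Par.refl E, Par.refl L⟩
  | app h1 h2 =>
    obtain ⟨E', rfl, hE⟩ := par_cons1_inv h1
    exact ⟨E', _, rfl, hE, h2⟩

/-- Parallel reduction preserves regular values. -/
theorem RegVal.par {V V' : Tm} (h : RegVal V) (p : Par V V') : RegVal V' := by
  cases h with
  | lam M => obtain ⟨M', rfl, _⟩ := par_lam_inv p; exact RegVal.lam M'
  | zero => rw [par_zero_inv p]; exact RegVal.zero
  | succ => rw [par_succ_inv p]; exact RegVal.succ
  | succApp N => obtain ⟨N', rfl, _⟩ := par_succApp_inv p; exact RegVal.succApp N'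
  | natrec => rw [par_natrec_inv p]; exact RegVal.natrec
  | natrec1 M => obtain ⟨M', rfl, _⟩ := par_natrec1_inv p; exact RegVal.natrec1 M'
  | natrec2 M N => obtain ⟨M', N', rfl, _, _⟩ := par_natrec2_inv p; exact RegVal.natrec2 M' N'
  | nil => rw [par_nil_inv p]; exact RegVal.nil
  | cons => rw [par_cons_inv p]; exact RegVal.cons
  | cons1 M => obtain ⟨M', rfl, _⟩ := par_cons1_inv p; exact RegVal.cons1 M'
  | cons2 M N => obtain ⟨M', N', rfl, _, _⟩ := par_cons2_inv p; exact RegVal.cons2 M' N'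
  | foldr => rw [par_foldr_inv p]; exact RegVal.foldr
  | foldr1 M => obtain ⟨M', rfl, _⟩ := par_foldr1_inv p; exact RegVal.foldr1 M'
  | foldr2 M N => obtain ⟨M', N', rfl, _, _⟩ := par_foldr2_inv p; exact RegVal.foldr2 M' N'

/-- Parallel reduction is closed under lifting. -/
theorem Par.lift {M M' : Tm} (h : Par M M') : ∀ k, Par (Tm.lift k M) (Tm.lift k M') := by
  induction h with
  | refl M => exact fun k => Par.refl _
  | lam _ ih => exact fun k => Par.lam (ih (k+1))
  | app _ _ ihM ihN => exact fun k => Par.app (ihM k) (ihN k)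
  | beta _ _ ihM ihN =>
    intro k
    simp only [Tm.lift, Tm.lift_subst _ 0 k _ (Nat.zero_le k)]
    exact Par.beta (ihM (k+1)) (ihN k)
  | raiseApp e M => exact fun k => Par.raiseApp e _
  | tryCatch _ ih => exact fun k => Par.tryCatch (ih k)
  | tryOther e e' N hne => exact fun k => Par.tryOther e e' _ hne
  | tryCong _ _ ihM ihN => exact fun k => Par.tryCong (ihM k) (ihN k)
  | tryVal hV _ ih => exact fun k => Par.tryVal (hV.lift k) (ih k)
  | recZero Y _ ih => exact fun k => Par.recZero _ (ih k)
  | recSucc _ _ _ ihX ihY ihN => exact fun k => Par.recSucc (ihX k) (ihY k) (ihN k)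
  | recRaise X Y e => exact fun k => Par.recRaise _ _ e
  | foldNil Y _ ih => exact fun k => Par.foldNil _ (ih k)
  | foldCons _ _ _ _ ihX ihY ihE ihL =>
    exact fun k => Par.foldCons (ihX k) (ihY k) (ihE k) (ihL k)
  | foldRaise X Y e => exact fun k => Par.foldRaise _ _ e

/-- Substituting a parallel reduct into a fixed term. -/
theorem par_subst_right (M : Tm) :
    ∀ (k : ℕ) {N N' : Tm}, Par N N' → Par (Tm.subst k N M) (Tm.subst k N' M) := by
  induction M with
  | var i =>
    intro k N N' h
    simp only [Tm.subst]
    split_ifs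
    · exact h
    · exact Par.refl _
    · exact Par.refl _
  | lam M ih => intro k N N' h; exact Par.lam (ih (k+1) (h.lift 0))
  | app M P ihM ihP => intro k N N' h; exact Par.app (ihM k h) (ihP k h)
  | tryc M e P ihM ihP => intro k N N' h; exact Par.tryCong (ihM k h) (ihP k h)
  | _ => intro k N N' h; exact Par.refl _

/-- The parallel substitution lemma. -/
theorem Par.subst {M M' : Tm} (hM : Par M M') :
    ∀ (k : ℕ) {N N' : Tm}, Par N N' → Par (Tm.subst k N M) (Tm.subst k N' M') := by
  induction hM with
  | refl M => intro k N N' hN; exact par_subst_right M k hN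
  | lam _ ih => intro k N N' hN; exact Par.lam (ih (k+1) (hN.lift 0))
  | app _ _ ihM ihP => intro k N N' hN; exact Par.app (ihM k hN) (ihP k hN)
  | beta _ _ ihM ihP =>
    intro k N N' hN
    simp only [Tm.subst]
    rw [Tm.subst_subst _ 0 k _ _ (Nat.zero_le k)]
    exact Par.beta (ihM (k+1) (hN.lift 0)) (ihP k hN)
  | raiseApp e M => intro k N N' hN; exact Par.raiseApp e _
  | tryCatch _ ih => intro k N N' hN; exact Par.tryCatch (ih k hN)
  | tryOther e e' P hne => intro k N N' hN; exact Par.tryOther e e' _ hne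
  | tryCong _ _ ihM ihP => intro k N N' hN; exact Par.tryCong (ihM k hN) (ihP k hN)
  | tryVal hV _ ih => intro k N N' hN; exact Par.tryVal (hV.subst k N) (ih k hN)
  | recZero Y _ ih => intro k N N' hN; exact Par.recZero _ (ih k hN)
  | recSucc _ _ _ ihX ihY ihP =>
    intro k N N' hN; exact Par.recSucc (ihX k hN) (ihY k hN) (ihP k hN)
  | recRaise X Y e => intro k N N' hN; exact Par.recRaise _ _ e
  | foldNil Y _ ih => intro k N N' hN; exact Par.foldNil _ (ih k hN)
  | foldCons _ _ _ _ ihX ihY ihE ihL =>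
    intro k N N' hN; exact Par.foldCons (ihX k hN) (ihY k hN) (ihE k hN) (ihL k hN)
  | foldRaise X Y e => intro k N N' hN; exact Par.foldRaise _ _ e
open Tm in
/-- Complete development (Takahashi translation). -/
def cd : Tm → Tm
  | .var i => .var i
  | .lam M => .lam (cd M)
  | .app (.lam M) N => Tm.subst 0 (cd N) (cd M)
  | .app (.raise e) _ => .raise e
  | .app (.app (.app .natrec X) _) .zero => cd X
  | .app (.app (.app .natrec X) Y) (.app .succ N) =>
      .app (.app (cd Y) (cd N)) (.app (.app (.app .natrec (cd X)) (cd Y)) (cd N))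
  | .app (.app (.app .natrec _) _) (.raise e) => .raise e
  | .app (.app (.app .foldr X) _) .nil => cd X
  | .app (.app (.app .foldr X) Y) (.app (.app .cons E) L) =>
      .app (.app (.app (cd Y) (cd E)) (cd L)) (.app (.app (.app .foldr (cd X)) (cd Y)) (cd L))
  | .app (.app (.app .foldr _) _) (.raise e) => .raise e
  | .app M N => .app (cd M) (cd N)
  | .tryc (.raise e') e N => if e' = e then cd N else .raise e'
  | .tryc M e N => if isRV M then cd M else .tryc (cd M) e (cd N)
  | .raise e => .raise e
  | .zero => .zero
  | .succ => .succ
  | .natrec => .natrec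
  | .nil => .nil
  | .cons => .cons
  | .foldr => .foldr

theorem par_cd (M : Tm) : Par M (cd M) := by
  induction M using cd.induct <;> simp only [cd]
  all_goals first
  | exact Par.refl _
  | (rw [if_pos trivial]; exact Par.tryCatch (by assumption))
  | (rw [if_neg (by assumption)];
     exact Par.tryOther _ _ _ (Ne.symm (by assumption)))
  | (rw [if_pos (by assumption : isRV _ = true)];
     exact Par.tryVal ((isRV_iff _).1 (by assumption)) (by assumption))
  | (rw [if_neg (by simp_all : ¬ isRV _ = true)];
     exact Par.tryCong (by assumption) (by assumption))
  | (exact Par.lam (by assumption))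
  | (exact Par.beta (by assumption) (by assumption))
  | exact Par.raiseApp _ _
  | (exact Par.recZero _ (by assumption))
  | (exact Par.recSucc (by assumption) (by assumption) (by assumption))
  | exact Par.recRaise _ _ _
  | (exact Par.foldNil _ (by assumption))
  | (exact Par.foldCons (by assumption) (by assumption) (by assumption) (by assumption))
  | exact Par.foldRaise _ _ _
  | (exact Par.app (by assumption) (by assumption))
theorem app_triangle {A A' B B' : Tm} (hA : Par A A') (hB : Par B B')
    (ihA : Par A' (cd A)) (ihB : Par B' (cd B)) : Par (Tm.app A' B') (cd (Tm.app A B)) := by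
  cases A
  case lam M0 =>
    obtain ⟨M0', rfl, hM0⟩ := par_lam_inv hA
    obtain ⟨M0c, heq, hM0'⟩ := par_lam_inv ihA
    simp only [cd] at heq
    injection heq with h; subst h
    exact Par.beta hM0' ihB
  case raise e =>
    cases par_raise_inv hA
    exact Par.raiseApp e B'
  case app A1 A2 =>
    cases A1
    case app A11 A12 =>
      cases A11
      case natrec =>
        obtain ⟨X', Y', rfl, hX, hY⟩ := par_natrec2_inv hA
        obtain ⟨X'', Y'', heq, hX', hY'⟩ := par_natrec2_inv ihA
        simp only [cd] at heq
        injection heq with h1 h2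
        injection h1 with h0 h3
        subst h2; subst h3
        cases B
        case zero => cases par_zero_inv hB; exact Par.recZero _ hX'
        case raise e => cases par_raise_inv hB; exact Par.recRaise _ _ e
        case app B1 B2 =>
          cases B1
          case succ =>
            obtain ⟨N0', rfl, hN0⟩ := par_succApp_inv hB
            obtain ⟨N0'', heq2, hN0'⟩ := par_succApp_inv ihB
            simp only [cd] at heq2
            injection heq2 with h4 h5
            subst h5
            exact Par.recSucc hX' hY' hN0'
          all_goals exact Par.app ihA ihB
        all_goals exact Par.app ihA ihB
      case foldr =>
        obtain ⟨X', Y', rfl, hX, hY⟩ := par_foldr2_inv hA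
        obtain ⟨X'', Y'', heq, hX', hY'⟩ := par_foldr2_inv ihA
        simp only [cd] at heq
        injection heq with h1 h2
        injection h1 with h0 h3
        subst h2; subst h3
        cases B
        case nil => cases par_nil_inv hB; exact Par.foldNil _ hX'
        case raise e => cases par_raise_inv hB; exact Par.foldRaise _ _ e
        case app B1 B2 =>
          cases B1
          case app B11 B12 =>
            cases B11
            case cons =>
              obtain ⟨E', L', rfl, hE, hL⟩ := par_cons2_inv hB
              obtain ⟨E'', L'', heq2, hE', hL'⟩ := par_cons2_inv ihB
              simp only [cd] at heq2
              injection heq2 with h5 h6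
              injection h5 with h7 h8
              subst h6; subst h8
              exact Par.foldCons hX' hY' hE' hL'
            all_goals exact Par.app ihA ihB
          all_goals exact Par.app ihA ihB
        all_goals exact Par.app ihA ihB
      all_goals exact Par.app ihA ihB
    all_goals exact Par.app ihA ihB
  all_goals exact Par.app ihA ihB

/-- The triangle property: every parallel reduct reduces to the complete development. -/
theorem par_triangle {M N : Tm} (h : Par M N) : Par N (cd M) := by
  induction h with
  | refl M => exact par_cd M
  | lam _ ih => exact Par.lam ih
  | app hA hB ihA ihB => exact app_triangle hA hB ihA ihB
  | beta _ _ ihM ihN => exact ihM.subst 0 ihN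
  | raiseApp e M => exact Par.refl _
  | tryCatch _ ih => simp only [cd]; rw [if_pos trivial]; exact ih
  | tryOther e e' N hne =>
    simp only [cd]; rw [if_neg (Ne.symm hne)]; exact Par.refl _
  | @tryCong A A' e B B' hA hB ihA ihB =>
    cases A
    case raise e'' =>
      cases par_raise_inv hA
      by_cases he : e'' = e
      · subst he; simp only [cd]; rw [if_pos trivial]; exact Par.tryCatch ihB
      · simp only [cd]; rw [if_neg he]; exact Par.tryOther _ _ _ (Ne.symm he)
    all_goals
      simp only [cd]
      split_ifs with hrv
      · exact Par.tryVal (((isRV_iff _).1 hrv).par hA) ihA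
      · exact Par.tryCong ihA ihB
  | tryVal hV hp ih =>
    cases hV <;> simp only [cd, isRV] <;> rw [if_pos trivial] <;> exact ih
  | recZero Y _ ih => exact ih
  | recSucc _ _ _ ihX ihY ihN =>
    exact Par.app (Par.app ihY ihN) (Par.app (Par.app (Par.app (Par.refl _) ihX) ihY) ihN)
  | recRaise X Y e => exact Par.refl _
  | foldNil Y _ ih => exact ih
  | foldCons _ _ _ _ ihX ihY ihE ihL =>
    exact Par.app (Par.app (Par.app ihY ihE) ihL)
      (Par.app (Par.app (Par.app (Par.refl _) ihX) ihY) ihL)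
  | foldRaise X Y e => exact Par.refl _
theorem fx_par_diamond (M N N' : Tm) (h1 : Par M N) (h2 : Par M N') :
    ∃ P, Par N P ∧ Par N' P :=
  ⟨cd M, par_triangle h1, par_triangle h2⟩
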